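/- For every k ≥ 1, the porous exponential domination number satisfies γ*_e(G_{k+1}) ≤ 3·γ*_e(G_k), where G_k denotes the k-th Apollonian network. -/

import Mathlib

/-- A family of Apollonian networks, given by a vertex set `Vert` together with a
generation labeling `gen` and an adjacency relation `adj`, satisfying the recursive
construction: the first generation `U₁` consists of three pairwise adjacent vertices
(forming `G₁`); and for each `k ≥ 1`, for each vertex `u` of generation `k` and each
adjacent pair `{x, y}` of neighbors of `u` in `G_k`, exactly one new vertex of
generation `k + 1` is created, adjacent to exactly `u`, `x`, and `y`.
The `k`-th Apollonian network `G_k` is the induced subgraph on the vertices of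
generation at most `k`. -/
structure ApollonianNetwork where
  Vert : Type
  adj : Vert → Vert → Prop
  adj_symm : ∀ a b, adj a b → adj b a
  adj_irrefl : ∀ a, ¬ adj a a
  gen : Vert → ℕ
  gen_pos : ∀ v, 1 ≤ gen v
  /-- The first generation consists of exactly three vertices. -/
  U1_card : ∃ a b c : Vert, a ≠ b ∧ a ≠ c ∧ b ≠ c ∧ {v | gen v = 1} = {a, b, c}
  /-- `G₁` is a complete graph on the first generation. -/
  U1_complete : ∀ a b, gen a = 1 → gen b = 1 → a ≠ b → adj a b
  /-- All edges join vertices of distinct generations, except within generation 1. -/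
  adj_gen : ∀ a b, adj a b → gen a = gen b → gen a = 1
  /-- Every vertex `v` of generation `k ≥ 2` is adjacent, among the vertices of earlier
  generations, to exactly three vertices `u`, `x`, `y`, where `u` has generation `k - 1`
  and `x`, `y` are neighbors of `u` in `G_{k-1}` that are adjacent to each other. -/
  created : ∀ v, 2 ≤ gen v → ∃ u x y,
    gen u = gen v - 1 ∧ gen x ≤ gen v - 1 ∧ gen y ≤ gen v - 1 ∧
    adj u x ∧ adj u y ∧ adj x y ∧
    {w | adj v w ∧ gen w < gen v} = {u, x, y}
  /-- For each `k ≥ 1`, each vertex `u` of generation `k`, and each adjacent pair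
  `{x, y}` of neighbors of `u` in `G_k`, there is exactly one vertex of generation
  `k + 1` whose neighbors in `G_{k+1}` are exactly `u`, `x`, and `y`. -/
  attach : ∀ k, 1 ≤ k → ∀ u x y,
    gen u = k → gen x ≤ k → gen y ≤ k → x ≠ y →
    adj u x → adj u y → adj x y →
    ∃! v, gen v = k + 1 ∧ {w | adj v w ∧ gen w ≤ k} = ({u, x, y} : Set Vert)

/-- The `k`-th Apollonian network `G_k`: the induced subgraph on the vertices of
generation at most `k`. -/
def ApollonianNetwork.G (A : ApollonianNetwork) (k : ℕ) :
    SimpleGraph {v : A.Vert // A.gen v ≤ k} where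
  Adj a b := A.adj a b
  symm := ⟨fun a b h => A.adj_symm a b h⟩
  loopless := ⟨fun a h => A.adj_irrefl a h⟩

open Classical in
/-- The porous exponential domination weight of a set `S` at a vertex `v`:
`∑_{u ∈ S} 1 / 2 ^ (d(u, v) - 1)`, where vertices at infinite distance from `v`
contribute `0`.  (Note `2 * (1/2) ^ d = 1 / 2 ^ (d - 1)` including for `d = 0`.) -/
noncomputable def expWeight {V : Type*} (G : SimpleGraph V) (S : Finset V) (v : V) : ℝ :=
  ∑ u ∈ S, if G.Reachable u v then 2 * (2 : ℝ)⁻¹ ^ G.dist u v else 0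

/-- `S` is a porous exponential dominating set for `G` if every vertex receives
total weight at least 1. -/
def IsPorousExpDomSet {V : Type*} (G : SimpleGraph V) (S : Finset V) : Prop :=
  ∀ v, 1 ≤ expWeight G S v

/-- The porous exponential domination number `γ*ₑ(G)`: the smallest cardinality of a
porous exponential dominating set for `G` (`⊤` if there is none). -/
noncomputable def porousExpDomNum {V : Type*} (G : SimpleGraph V) : ℕ∞ :=
  sInf {n : ℕ∞ | ∃ S : Finset V, IsPorousExpDomSet G S ∧ (S.card : ℕ∞) = n}


namespace ApollonianNetwork
variable (A : ApollonianNetwork)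

lemma adj_ne {a b : A.Vert} (h : A.adj a b) : a ≠ b := by
  rintro rfl; exact A.adj_irrefl a h

noncomputable def cA : A.Vert := A.U1_card.choose
noncomputable def cB : A.Vert := A.U1_card.choose_spec.choose
noncomputable def cC : A.Vert := A.U1_card.choose_spec.choose_spec.choose

lemma corner_spec : A.cA ≠ A.cB ∧ A.cA ≠ A.cC ∧ A.cB ≠ A.cC ∧
    {v | A.gen v = 1} = {A.cA, A.cB, A.cC} :=
  A.U1_card.choose_spec.choose_spec.choose_spec

lemma gen1_iff (v : A.Vert) : A.gen v = 1 ↔ (v = A.cA ∨ v = A.cB ∨ v = A.cC) := by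
  have h := A.corner_spec.2.2.2
  constructor
  · intro hv
    have : v ∈ {v | A.gen v = 1} := hv
    rw [h] at this; exact this
  · intro hv
    have : v ∈ ({A.cA, A.cB, A.cC} : Set A.Vert) := hv
    rw [← h] at this; exact this

lemma gen_cA : A.gen A.cA = 1 := (A.gen1_iff _).2 (Or.inl rfl)
lemma gen_cB : A.gen A.cB = 1 := (A.gen1_iff _).2 (Or.inr (Or.inl rfl))
lemma gen_cC : A.gen A.cC = 1 := (A.gen1_iff _).2 (Or.inr (Or.inr rfl))

lemma apex_exu : ∃! v, A.gen v = 1 + 1 ∧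
    {w | A.adj v w ∧ A.gen w ≤ 1} = ({A.cA, A.cB, A.cC} : Set A.Vert) :=
  A.attach 1 le_rfl A.cA A.cB A.cC A.gen_cA A.gen_cB.le A.gen_cC.le A.corner_spec.2.2.1
    (A.U1_complete _ _ A.gen_cA A.gen_cB A.corner_spec.1)
    (A.U1_complete _ _ A.gen_cA A.gen_cC A.corner_spec.2.1)
    (A.U1_complete _ _ A.gen_cB A.gen_cC A.corner_spec.2.2.1)

noncomputable def apx : A.Vert := A.apex_exu.exists.choose

lemma gen_apx : A.gen A.apx = 2 := A.apex_exu.exists.choose_spec.1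

lemma apx_downset : {w | A.adj A.apx w ∧ A.gen w ≤ 1} = ({A.cA, A.cB, A.cC} : Set A.Vert) :=
  A.apex_exu.exists.choose_spec.2

lemma adj_apx {w : A.Vert} (hw : A.gen w = 1) : A.adj A.apx w := by
  have : w ∈ {w | A.adj A.apx w ∧ A.gen w ≤ 1} := by
    rw [A.apx_downset]; exact (A.gen1_iff w).1 hw
  exact this.1

/-- chosen triple of a vertex of generation ≥ 2 -/
noncomputable def crU (v : A.Vert) (h : 2 ≤ A.gen v) : A.Vert := (A.created v h).choose
noncomputable def crX (v : A.Vert) (h : 2 ≤ A.gen v) : A.Vert :=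
  (A.created v h).choose_spec.choose
noncomputable def crY (v : A.Vert) (h : 2 ≤ A.gen v) : A.Vert :=
  (A.created v h).choose_spec.choose_spec.choose

lemma cr_spec (v : A.Vert) (h : 2 ≤ A.gen v) :
    A.gen (A.crU v h) = A.gen v - 1 ∧ A.gen (A.crX v h) ≤ A.gen v - 1 ∧
    A.gen (A.crY v h) ≤ A.gen v - 1 ∧
    A.adj (A.crU v h) (A.crX v h) ∧ A.adj (A.crU v h) (A.crY v h) ∧
    A.adj (A.crX v h) (A.crY v h) ∧
    {w | A.adj v w ∧ A.gen w < A.gen v} = {A.crU v h, A.crX v h, A.crY v h} :=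
  (A.created v h).choose_spec.choose_spec.choose_spec

lemma crU_lt (v : A.Vert) (h : 2 ≤ A.gen v) : A.gen (A.crU v h) < A.gen v := by
  have := (A.cr_spec v h).1; omega
lemma crX_lt (v : A.Vert) (h : 2 ≤ A.gen v) : A.gen (A.crX v h) < A.gen v := by
  have := (A.cr_spec v h).2.1; omega
lemma crY_lt (v : A.Vert) (h : 2 ≤ A.gen v) : A.gen (A.crY v h) < A.gen v := by
  have := (A.cr_spec v h).2.2.1; omega

open Classical in
noncomputable def psi (r : A.Vert) (v : A.Vert) : A.Vert :=
  if h : 2 ≤ A.gen v then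
    have : Nonempty A.Vert := ⟨v⟩
    Classical.epsilon fun w => A.gen w = A.gen v + 1 ∧
      {t | A.adj w t ∧ A.gen t ≤ A.gen v} =
        ({psi r (A.crU v h), psi r (A.crX v h), psi r (A.crY v h)} : Set A.Vert)
  else if v = r then A.apx else v
termination_by A.gen v
decreasing_by
  · exact A.crU_lt v h
  · exact A.crX_lt v h
  · exact A.crY_lt v h

open Classical in
lemma psi_gen1 (r v : A.Vert) (hv : A.gen v = 1) :
    A.psi r v = if v = r then A.apx else v := by
  rw [psi]
  rw [dif_neg (by omega)]

lemma gen1_fourth (p q s t : A.Vert) (hp : A.gen p = 1) (hq : A.gen q = 1)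
    (hs : A.gen s = 1) (ht : A.gen t = 1) (hpq : p ≠ q) (hps : p ≠ s) (hqs : q ≠ s) :
    t = p ∨ t = q ∨ t = s := by
  have hp' := (A.gen1_iff p).1 hp
  have hq' := (A.gen1_iff q).1 hq
  have hs' := (A.gen1_iff s).1 hs
  have ht' := (A.gen1_iff t).1 ht
  rcases hp' with h|h|h <;> rcases hq' with h'|h'|h' <;> rcases hs' with h''|h''|h'' <;>
    rcases ht' with h'''|h'''|h''' <;> subst_vars <;> tauto

open Classical in
lemma psi_eq (r : A.Vert) (v : A.Vert) (h2 : 2 ≤ A.gen v) :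
    A.psi r v = @Classical.epsilon _ ⟨v⟩ (fun w => A.gen w = A.gen v + 1 ∧
      {t | A.adj w t ∧ A.gen t ≤ A.gen v} =
        ({A.psi r (A.crU v h2), A.psi r (A.crX v h2), A.psi r (A.crY v h2)} : Set A.Vert)) := by
  rw [psi, dif_pos h2]

open Classical in
lemma psi_spec (r : A.Vert) (hr : A.gen r = 1) : ∀ (n : ℕ) (v : A.Vert),
    A.gen v = n → 2 ≤ n →
    A.gen (A.psi r v) = A.gen v + 1 ∧
    {t | A.adj (A.psi r v) t ∧ A.gen t ≤ A.gen v} =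
      A.psi r '' {t | A.adj v t ∧ A.gen t < A.gen v} := by
  intro n
  induction n using Nat.strong_induction_on with
  | _ n IH =>
  intro v hv h2n
  have h2 : 2 ≤ A.gen v := by omega
  obtain ⟨hgu, hgx, hgy, hux, huy, hxy, hds⟩ := A.cr_spec v h2
  set u := A.crU v h2 with hu_def
  set x := A.crX v h2 with hx_def
  set y := A.crY v h2 with hy_def
  have key1 : ∀ s t, A.adj s t → A.gen s = 1 → A.gen t = 1 →
      A.adj (A.psi r s) (A.psi r t) := by
    intro s t hst hs ht
    rw [A.psi_gen1 r s hs, A.psi_gen1 r t ht]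
    by_cases hsr : s = r
    · rw [if_pos hsr, if_neg (fun h => adj_ne A hst (hsr.trans h.symm))]
      exact A.adj_apx ht
    · rw [if_neg hsr]
      by_cases htr : t = r
      · rw [if_pos htr]; exact A.adj_symm _ _ (A.adj_apx hs)
      · rw [if_neg htr]; exact hst
  have key : ∀ s t, A.adj s t → A.gen t < A.gen s → A.gen s ≤ n - 1 →
      A.adj (A.psi r s) (A.psi r t) ∧ A.gen (A.psi r t) ≤ A.gen s := by
    intro s t hst hlt hle
    have h2s : 2 ≤ A.gen s := by have := A.gen_pos t; omega
    have IHs := IH (A.gen s) (by omega) s rfl h2s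
    have hmem : A.psi r t ∈ {w | A.adj (A.psi r s) w ∧ A.gen w ≤ A.gen s} := by
      rw [IHs.2]; exact ⟨t, ⟨hst, hlt⟩, rfl⟩
    exact ⟨hmem.1, hmem.2⟩
  have hadj_any : ∀ s t, A.adj s t → A.gen s ≤ n - 1 → A.gen t ≤ n - 1 →
      A.adj (A.psi r s) (A.psi r t) := by
    intro s t hst hsle htle
    rcases lt_trichotomy (A.gen s) (A.gen t) with h | h | h
    · exact A.adj_symm _ _ (key t s (A.adj_symm _ _ hst) h htle).1
    · have h1 : A.gen s = 1 := A.adj_gen s t hst h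
      exact key1 s t hst h1 (by omega)
    · exact (key s t hst h hsle).1
  have hE : ∃ w, A.gen w = A.gen v + 1 ∧
      {t | A.adj w t ∧ A.gen t ≤ A.gen v} =
        ({A.psi r u, A.psi r x, A.psi r y} : Set A.Vert) := by
    rcases eq_or_lt_of_le h2n with hn2 | hn3
    · -- generation 2 case
      have hgv : A.gen v = 2 := by omega
      have hu1 : A.gen u = 1 := by omega
      have hx1 : A.gen x = 1 := by have := A.gen_pos x; omega
      have hy1 : A.gen y = 1 := by have := A.gen_pos y; omega
      have hune : u ≠ x := adj_ne A hux
      have hune' : u ≠ y := adj_ne A huy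
      have hxyne : x ≠ y := adj_ne A hxy
      have hr_mem : r = u ∨ r = x ∨ r = y :=
        A.gen1_fourth u x y r hu1 hx1 hy1 hr hune hune' hxyne
      have hpsi_ne : ∀ t, A.gen t = 1 → t ≠ r → A.psi r t = t := by
        intro t ht htr; rw [A.psi_gen1 r t ht, if_neg htr]
      have hpsi_r : A.psi r r = A.apx := by
        rw [A.psi_gen1 r r hr, if_pos rfl]
      rcases hr_mem with hrw | hrw | hrw
      · -- r = u : attach apx x y
        have hpu : A.psi r u = A.apx := by rw [← hrw, hpsi_r]
        have hpx : A.psi r x = x := hpsi_ne x hx1 (fun h => hune (hrw ▸ h).symm)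
        have hpy : A.psi r y = y := hpsi_ne y hy1 (fun h => hune' (hrw ▸ h).symm)
        obtain ⟨w, ⟨hw1, hw2⟩, -⟩ := A.attach 2 (by norm_num) A.apx x y A.gen_apx
          (by omega) (by omega) hxyne (A.adj_apx hx1) (A.adj_apx hy1) hxy
        exact ⟨w, by rw [hgv]; exact hw1, by rw [hgv, hpu, hpx, hpy]; exact hw2⟩
      · -- r = x : attach apx u y
        have hpx : A.psi r x = A.apx := by rw [← hrw, hpsi_r]
        have hpu : A.psi r u = u := hpsi_ne u hu1 (fun h => hune (h.trans hrw))
        have hpy : A.psi r y = y := hpsi_ne y hy1 (fun h => hxyne (hrw ▸ h).symm)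
        obtain ⟨w, ⟨hw1, hw2⟩, -⟩ := A.attach 2 (by norm_num) A.apx u y A.gen_apx
          (by omega) (by omega) hune' (A.adj_apx hu1) (A.adj_apx hy1) huy
        refine ⟨w, by rw [hgv]; exact hw1, ?_⟩
        rw [hgv, hpu, hpx, hpy, hw2]
        ext t
        simp only [Set.mem_insert_iff, Set.mem_singleton_iff]
        tauto
      · -- r = y : attach apx u x
        have hpy : A.psi r y = A.apx := by rw [← hrw, hpsi_r]
        have hpu : A.psi r u = u := hpsi_ne u hu1 (fun h => hune' (h.trans hrw))
        have hpx : A.psi r x = x := hpsi_ne x hx1 (fun h => hxyne (h.trans hrw))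
        obtain ⟨w, ⟨hw1, hw2⟩, -⟩ := A.attach 2 (by norm_num) A.apx u x A.gen_apx
          (by omega) (by omega) hune (A.adj_apx hu1) (A.adj_apx hx1) hux
        refine ⟨w, by rw [hgv]; exact hw1, ?_⟩
        rw [hgv, hpu, hpx, hpy, hw2]
        ext t
        simp only [Set.mem_insert_iff, Set.mem_singleton_iff]
        tauto
    · -- generation ≥ 3 case
      have hgu2 : 2 ≤ A.gen u := by omega
      have IHu := IH (A.gen u) (by omega) u rfl hgu2
      have hxlt : A.gen x < A.gen u := by
        rcases lt_or_eq_of_le (show A.gen x ≤ A.gen u by omega) with h | h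
        · exact h
        · exfalso; have := A.adj_gen u x hux h.symm; omega
      have hylt : A.gen y < A.gen u := by
        rcases lt_or_eq_of_le (show A.gen y ≤ A.gen u by omega) with h | h
        · exact h
        · exfalso; have := A.adj_gen u y huy h.symm; omega
      have hkx := key u x hux hxlt (by omega)
      have hky := key u y huy hylt (by omega)
      have hxy' : A.adj (A.psi r x) (A.psi r y) := hadj_any x y hxy (by omega) (by omega)
      obtain ⟨w, ⟨hw1, hw2⟩, -⟩ := A.attach n (by omega) (A.psi r u) (A.psi r x) (A.psi r y)
        (by rw [IHu.1]; omega) (by have := hkx.2; omega) (by have := hky.2; omega)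
        (adj_ne A hxy') hkx.1 hky.1 hxy'
      exact ⟨w, by rw [hv]; exact hw1, by rw [hv]; exact hw2⟩
  have hev : A.gen (A.psi r v) = A.gen v + 1 ∧
      {t | A.adj (A.psi r v) t ∧ A.gen t ≤ A.gen v} =
        ({A.psi r u, A.psi r x, A.psi r y} : Set A.Vert) := by
    rw [A.psi_eq r v h2]
    exact Classical.epsilon_spec hE
  refine ⟨hev.1, hev.2.trans ?_⟩
  rw [hds, Set.image_insert_eq, Set.image_insert_eq, Set.image_singleton]



lemma psi_gen_ge2 (r : A.Vert) (hr : A.gen r = 1) (v : A.Vert) (h2 : 2 ≤ A.gen v) :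
    A.gen (A.psi r v) = A.gen v + 1 :=
  (A.psi_spec r hr (A.gen v) v rfl h2).1

lemma psi_downset (r : A.Vert) (hr : A.gen r = 1) (v : A.Vert) (h2 : 2 ≤ A.gen v) :
    {t | A.adj (A.psi r v) t ∧ A.gen t ≤ A.gen v} =
      A.psi r '' {t | A.adj v t ∧ A.gen t < A.gen v} :=
  (A.psi_spec r hr (A.gen v) v rfl h2).2

open Classical in
lemma psi_self (r : A.Vert) (hr : A.gen r = 1) : A.psi r r = A.apx := by
  rw [A.psi_gen1 r r hr, if_pos rfl]

open Classical in
lemma psi_id (r : A.Vert) {v : A.Vert} (hv : A.gen v = 1) (hvr : v ≠ r) :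
    A.psi r v = v := by
  rw [A.psi_gen1 r v hv, if_neg hvr]

lemma psi_gen_le (r : A.Vert) (hr : A.gen r = 1) (v : A.Vert) :
    A.gen (A.psi r v) ≤ A.gen v + 1 := by
  by_cases h2 : 2 ≤ A.gen v
  · rw [A.psi_gen_ge2 r hr v h2]
  · have hv1 : A.gen v = 1 := by have := A.gen_pos v; omega
    by_cases hvr : v = r
    · rw [hvr, A.psi_self r hr, A.gen_apx]; omega
    · rw [A.psi_id r hv1 hvr]; omega

lemma psi_adj_of_lt (r : A.Vert) (hr : A.gen r = 1) {s t : A.Vert} (hst : A.adj s t)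
    (hlt : A.gen t < A.gen s) :
    A.adj (A.psi r s) (A.psi r t) ∧ A.gen (A.psi r t) ≤ A.gen s := by
  have h2s : 2 ≤ A.gen s := by have := A.gen_pos t; omega
  have hmem : A.psi r t ∈ {w | A.adj (A.psi r s) w ∧ A.gen w ≤ A.gen s} := by
    rw [A.psi_downset r hr s h2s]; exact ⟨t, ⟨hst, hlt⟩, rfl⟩
  exact ⟨hmem.1, hmem.2⟩

open Classical in
lemma psi_adj (r : A.Vert) (hr : A.gen r = 1) {s t : A.Vert} (hst : A.adj s t) :
    A.adj (A.psi r s) (A.psi r t) := by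
  rcases lt_trichotomy (A.gen s) (A.gen t) with h | h | h
  · exact A.adj_symm _ _ (A.psi_adj_of_lt r hr (A.adj_symm _ _ hst) h).1
  · have hs1 : A.gen s = 1 := A.adj_gen s t hst h
    have ht1 : A.gen t = 1 := by omega
    rw [A.psi_gen1 r s hs1, A.psi_gen1 r t ht1]
    by_cases hsr : s = r
    · rw [if_pos hsr, if_neg (fun hh => adj_ne A hst (hsr.trans hh.symm))]
      exact A.adj_apx ht1
    · rw [if_neg hsr]
      by_cases htr : t = r
      · rw [if_pos htr]; exact A.adj_symm _ _ (A.adj_apx hs1)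
      · rw [if_neg htr]; exact hst
  · exact (A.psi_adj_of_lt r hr hst h).1

lemma downset_le_eq (v : A.Vert) (m : ℕ) (hm : A.gen v = m + 1) :
    {t | A.adj v t ∧ A.gen t < A.gen v} = {t | A.adj v t ∧ A.gen t ≤ m} := by
  ext t
  simp only [Set.mem_setOf_eq]
  exact and_congr_right fun _ => by omega

lemma gen2_eq_apx (v : A.Vert) (hv : A.gen v = 2) : v = A.apx := by
  have h2 : 2 ≤ A.gen v := hv.ge
  obtain ⟨hgu, hgx, hgy, hux, huy, hxy, hds⟩ := A.cr_spec v h2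
  set u := A.crU v h2
  set x := A.crX v h2
  set y := A.crY v h2
  have hu1 : A.gen u = 1 := by omega
  have hx1 : A.gen x = 1 := by have := A.gen_pos x; omega
  have hy1 : A.gen y = 1 := by have := A.gen_pos y; omega
  have hset : {w | A.adj v w ∧ A.gen w ≤ 1} = ({A.cA, A.cB, A.cC} : Set A.Vert) := by
    have hconv := A.downset_le_eq v 1 (by omega)
    rw [← hconv, hds]
    ext t
    simp only [Set.mem_insert_iff, Set.mem_singleton_iff]
    constructor
    · rintro (rfl | rfl | rfl)
      · exact (A.gen1_iff _).1 hu1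
      · exact (A.gen1_iff _).1 hx1
      · exact (A.gen1_iff _).1 hy1
    · rintro (rfl | rfl | rfl)
      · exact A.gen1_fourth u x y _ hu1 hx1 hy1 A.gen_cA
          (adj_ne A hux) (adj_ne A huy) (adj_ne A hxy)
      · exact A.gen1_fourth u x y _ hu1 hx1 hy1 A.gen_cB
          (adj_ne A hux) (adj_ne A huy) (adj_ne A hxy)
      · exact A.gen1_fourth u x y _ hu1 hx1 hy1 A.gen_cC
          (adj_ne A hux) (adj_ne A huy) (adj_ne A hxy)
  exact A.apex_exu.unique ⟨hv, hset⟩ ⟨A.gen_apx, A.apx_downset⟩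

lemma psi_inj (r : A.Vert) (hr : A.gen r = 1) :
    ∀ (n : ℕ) (s t : A.Vert), A.gen s ≤ n → A.gen t ≤ n → A.psi r s = A.psi r t → s = t := by
  intro n
  induction n using Nat.strong_induction_on with
  | _ n IH =>
  intro s t hs ht heq
  by_cases h2s : 2 ≤ A.gen s <;> by_cases h2t : 2 ≤ A.gen t
  · have Hs := A.psi_spec r hr (A.gen s) s rfl h2s
    have Ht := A.psi_spec r hr (A.gen t) t rfl h2t
    have hgen : A.gen s = A.gen t := by
      have := Hs.1; have := Ht.1; rw [heq] at *; omega
    have himg : A.psi r '' {w | A.adj s w ∧ A.gen w < A.gen s} =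
        A.psi r '' {w | A.adj t w ∧ A.gen w < A.gen t} := by
      rw [← Hs.2, ← Ht.2, heq, hgen]
    have hsets : {w | A.adj s w ∧ A.gen w < A.gen s} = {w | A.adj t w ∧ A.gen w < A.gen t} := by
      ext a
      constructor
      · intro ha
        have : A.psi r a ∈ A.psi r '' {w | A.adj t w ∧ A.gen w < A.gen t} := by
          rw [← himg]; exact ⟨a, ha, rfl⟩
        obtain ⟨b, hb, hba⟩ := this
        have hab : a = b := by
          refine (IH (n-1) (by omega) b a ?_ ?_ hba).symm
          · have := hb.2; omega
          · have := ha.2; omega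
        rw [hab]; exact hb
      · intro ha
        have : A.psi r a ∈ A.psi r '' {w | A.adj s w ∧ A.gen w < A.gen s} := by
          rw [himg]; exact ⟨a, ha, rfl⟩
        obtain ⟨b, hb, hba⟩ := this
        have hab : a = b := by
          refine (IH (n-1) (by omega) b a ?_ ?_ hba).symm
          · have := hb.2; omega
          · have := ha.2; omega
        rw [hab]; exact hb
    obtain ⟨hgu, hgx, hgy, hux, huy, hxy, hds⟩ := A.cr_spec s h2s
    have exu := A.attach (A.gen s - 1) (by omega) (A.crU s h2s) (A.crX s h2s) (A.crY s h2s)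
      hgu hgx hgy (adj_ne A hxy) hux huy hxy
    have hconv : ∀ w : A.Vert, A.gen w = A.gen s →
        {a | A.adj w a ∧ A.gen a < A.gen w} = {a | A.adj w a ∧ A.gen a ≤ A.gen s - 1} := by
      intro w hw
      ext a
      simp only [Set.mem_setOf_eq]
      exact and_congr_right fun _ => by omega
    refine exu.unique ⟨by omega, ?_⟩ ⟨by omega, ?_⟩
    · rw [← hconv s rfl]; exact hds
    · rw [← hconv t hgen.symm, ← hsets]; exact hds
  · exfalso
    have ht1 : A.gen t = 1 := by have := A.gen_pos t; omega
    have h1 := A.psi_gen_ge2 r hr s h2s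
    have h2 := A.psi_gen_le r hr t
    rw [heq] at h1
    rw [ht1] at h2
    omega
  · exfalso
    have hs1 : A.gen s = 1 := by have := A.gen_pos s; omega
    have h1 := A.psi_gen_ge2 r hr t h2t
    have h2 := A.psi_gen_le r hr s
    rw [← heq] at h1
    rw [hs1] at h2
    omega
  · have hs1 : A.gen s = 1 := by have := A.gen_pos s; omega
    have ht1 : A.gen t = 1 := by have := A.gen_pos t; omega
    by_cases hsr : s = r <;> by_cases htr : t = r
    · rw [hsr, htr]
    · exfalso
      rw [hsr, A.psi_self r hr, A.psi_id r ht1 htr] at heq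
      have := A.gen_apx; rw [heq] at this; omega
    · exfalso
      rw [htr, A.psi_self r hr, A.psi_id r hs1 hsr] at heq
      have := A.gen_apx; rw [← heq] at this; omega
    · rwa [A.psi_id r hs1 hsr, A.psi_id r ht1 htr] at heq

lemma third_corner (x y : A.Vert) (hx : A.gen x = 1) (hy : A.gen y = 1) (hxy : x ≠ y) :
    ∃ r, A.gen r = 1 ∧ r ≠ x ∧ r ≠ y := by
  have c := A.corner_spec
  rcases (A.gen1_iff x).1 hx with rfl|rfl|rfl <;> rcases (A.gen1_iff y).1 hy with rfl|rfl|rfl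
  · exact absurd rfl hxy
  · exact ⟨A.cC, A.gen_cC, Ne.symm c.2.1, Ne.symm c.2.2.1⟩
  · exact ⟨A.cB, A.gen_cB, Ne.symm c.1, c.2.2.1⟩
  · exact ⟨A.cC, A.gen_cC, Ne.symm c.2.2.1, Ne.symm c.2.1⟩
  · exact absurd rfl hxy
  · exact ⟨A.cA, A.gen_cA, c.1, c.2.1⟩
  · exact ⟨A.cB, A.gen_cB, c.2.2.1, Ne.symm c.1⟩
  · exact ⟨A.cA, A.gen_cA, c.2.1, c.1⟩
  · exact absurd rfl hxy

lemma triple_adj {p q w s t : A.Vert} (h1 : A.adj p q) (h2 : A.adj p w) (h3 : A.adj q w)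
    (hs : s ∈ ({p, q, w} : Set A.Vert)) (ht : t ∈ ({p, q, w} : Set A.Vert)) (hne : s ≠ t) :
    A.adj s t := by
  simp only [Set.mem_insert_iff, Set.mem_singleton_iff] at hs ht
  rcases hs with rfl | rfl | rfl <;> rcases ht with rfl | rfl | rfl <;>
    first
      | exact absurd rfl hne
      | assumption
      | exact A.adj_symm _ _ ‹_›


lemma sur : ∀ (m : ℕ), 2 ≤ m → ∀ u x y : A.Vert,
    A.gen u = m → A.gen x ≤ m - 1 → A.gen y ≤ m - 1 → x ≠ y →
    A.adj u x → A.adj u y → A.adj x y →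
    ∃ r, A.gen r = 1 ∧ ∃ u' x' y' : A.Vert,
      A.gen u' = m - 1 ∧ A.gen x' ≤ m - 1 ∧ A.gen y' ≤ m - 1 ∧ x' ≠ y' ∧
      A.adj u' x' ∧ A.adj u' y' ∧ A.adj x' y' ∧
      A.psi r u' = u ∧ A.psi r x' = x ∧ A.psi r y' = y := by
  intro m
  induction m using Nat.strong_induction_on with
  | _ m IH =>
  intro hm u x y hgu hgx hgy hxyne hux huy hxy
  rcases eq_or_lt_of_le hm with hm2 | hm3
  · -- base case m = 2
    have hx1 : A.gen x = 1 := by have := A.gen_pos x; omega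
    have hy1 : A.gen y = 1 := by have := A.gen_pos y; omega
    obtain ⟨r, hr, hrx, hry⟩ := A.third_corner x y hx1 hy1 hxyne
    refine ⟨r, hr, r, x, y, by omega, by omega, by omega, hxyne, ?_, ?_, hxy, ?_, ?_, ?_⟩
    · exact A.U1_complete r x hr hx1 hrx
    · exact A.U1_complete r y hr hy1 hry
    · rw [A.psi_self r hr]
      exact (A.gen2_eq_apx u (by omega)).symm
    · exact A.psi_id r hx1 (Ne.symm hrx)
    · exact A.psi_id r hy1 (Ne.symm hry)
  · -- inductive step m ≥ 3
    have h2u : 2 ≤ A.gen u := by omega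
    obtain ⟨hgu0, hgx0, hgy0, hux0, huy0, hxy0, hds0⟩ := A.cr_spec u h2u
    set u0 := A.crU u h2u
    set x0 := A.crX u h2u
    set y0 := A.crY u h2u
    have hgu0' : A.gen u0 = m - 1 := by omega
    have hgx0' : A.gen x0 ≤ m - 2 := by
      rcases lt_or_eq_of_le (show A.gen x0 ≤ m - 1 by omega) with h | h
      · omega
      · exfalso; have := A.adj_gen u0 x0 hux0 (by omega); omega
    have hgy0' : A.gen y0 ≤ m - 2 := by
      rcases lt_or_eq_of_le (show A.gen y0 ≤ m - 1 by omega) with h | h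
      · omega
      · exfalso; have := A.adj_gen u0 y0 huy0 (by omega); omega
    obtain ⟨r, hr, p, q, s, hgp, hgq, hgs, hqs, hpq, hps, hqs', hpu0, hqx0, hsy0⟩ :=
      IH (m-1) (by omega) (by omega) u0 x0 y0 (by omega) (by omega) (by omega)
        (adj_ne A hxy0) hux0 huy0 hxy0
    -- attach the triangle (p,q,s) to get the preimage u' of u
    obtain ⟨u', ⟨hu'1, hu'2⟩, -⟩ := A.attach (m-2) (by omega) p q s (by omega)
      (by omega) (by omega) hqs hpq hps hqs'
    have hgenu' : A.gen u' = m - 1 := by omega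
    have h2u' : 2 ≤ A.gen u' := by omega
    -- ψ u' = u
    have hpsiu' : A.psi r u' = u := by
      have H1 := A.psi_gen_ge2 r hr u' h2u'
      have H2 := A.psi_downset r hr u' h2u'
      have hconv : {t | A.adj u' t ∧ A.gen t < A.gen u'} = {t | A.adj u' t ∧ A.gen t ≤ m - 2} := by
        ext t
        simp only [Set.mem_setOf_eq]
        exact and_congr_right fun _ => by omega
      rw [hconv, hu'2, Set.image_insert_eq, Set.image_insert_eq, Set.image_singleton,
        hpu0, hqx0, hsy0] at H2
      have exu := A.attach (m-1) (by omega) u0 x0 y0 hgu0' (by omega) (by omega)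
        (adj_ne A hxy0) hux0 huy0 hxy0
      refine exu.unique ⟨by omega, ?_⟩ ⟨by omega, ?_⟩
      · rw [show A.gen u' = m - 1 from hgenu'] at H2
        exact H2
      · have : {t | A.adj u t ∧ A.gen t < A.gen u} = {t | A.adj u t ∧ A.gen t ≤ m - 1} := by
          ext t
          simp only [Set.mem_setOf_eq]
          exact and_congr_right fun _ => by omega
        rw [← this]; exact hds0
    -- now locate x and y inside the triple of u
    have hxmem : x ∈ ({u0, x0, y0} : Set A.Vert) := by
      rw [← hds0]; exact ⟨hux, by omega⟩
    have hymem : y ∈ ({u0, x0, y0} : Set A.Vert) := by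
      rw [← hds0]; exact ⟨huy, by omega⟩
    have hu'ds : {t | A.adj u' t ∧ A.gen t ≤ m - 2} = ({p, q, s} : Set A.Vert) := hu'2
    have hx' : ∃ x', x' ∈ ({p, q, s} : Set A.Vert) ∧ A.gen x' ≤ m - 1 ∧ A.psi r x' = x := by
      simp only [Set.mem_insert_iff, Set.mem_singleton_iff] at hxmem
      rcases hxmem with rfl | rfl | rfl
      · exact ⟨p, by simp, by omega, hpu0⟩
      · exact ⟨q, by simp, by omega, hqx0⟩
      · exact ⟨s, by simp, by omega, hsy0⟩
    have hy' : ∃ y', y' ∈ ({p, q, s} : Set A.Vert) ∧ A.gen y' ≤ m - 1 ∧ A.psi r y' = y := by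
      simp only [Set.mem_insert_iff, Set.mem_singleton_iff] at hymem
      rcases hymem with rfl | rfl | rfl
      · exact ⟨p, by simp, by omega, hpu0⟩
      · exact ⟨q, by simp, by omega, hqx0⟩
      · exact ⟨s, by simp, by omega, hsy0⟩
    obtain ⟨x', hx'mem, hx'gen, hx'psi⟩ := hx'
    obtain ⟨y', hy'mem, hy'gen, hy'psi⟩ := hy'
    have hx'y'ne : x' ≠ y' := by
      rintro rfl; rw [hx'psi] at hy'psi; exact hxyne hy'psi
    have hadjux' : A.adj u' x' := by
      have : x' ∈ {t | A.adj u' t ∧ A.gen t ≤ m - 2} := by rw [hu'ds]; exact hx'mem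
      exact this.1
    have hadjuy' : A.adj u' y' := by
      have : y' ∈ {t | A.adj u' t ∧ A.gen t ≤ m - 2} := by rw [hu'ds]; exact hy'mem
      exact this.1
    have hadjx'y' : A.adj x' y' := A.triple_adj hpq hps hqs' hx'mem hy'mem hx'y'ne
    exact ⟨r, hr, u', x', y', hgenu', hx'gen, hy'gen, hx'y'ne,
      hadjux', hadjuy', hadjx'y', hpsiu', hx'psi, hy'psi⟩

lemma cover (k : ℕ) (hk : 1 ≤ k) : ∀ z : A.Vert, A.gen z ≤ k + 1 →
    ∃ r, A.gen r = 1 ∧ ∃ z' : A.Vert, A.gen z' ≤ k ∧ A.psi r z' = z := by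
  intro z hz
  by_cases h1 : A.gen z = 1
  · have : ∃ r, A.gen r = 1 ∧ z ≠ r := by
      by_cases h : z = A.cA
      · exact ⟨A.cB, A.gen_cB, by rw [h]; exact A.corner_spec.1⟩
      · exact ⟨A.cA, A.gen_cA, h⟩
    obtain ⟨r, hr, hzr⟩ := this
    exact ⟨r, hr, z, by omega, A.psi_id r h1 hzr⟩
  · by_cases h2 : A.gen z = 2
    · refine ⟨A.cA, A.gen_cA, A.cA, by rw [A.gen_cA]; omega, ?_⟩
      rw [A.psi_self A.cA A.gen_cA]
      exact (A.gen2_eq_apx z h2).symm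
    · have h3 : 3 ≤ A.gen z := by have := A.gen_pos z; omega
      have h2z : 2 ≤ A.gen z := by omega
      obtain ⟨hgu, hgx, hgy, hux, huy, hxy, hds⟩ := A.cr_spec z h2z
      set u := A.crU z h2z
      set x := A.crX z h2z
      set y := A.crY z h2z
      set m := A.gen z - 1 with hm_def
      have hgu' : A.gen u = m := by omega
      have hgx' : A.gen x ≤ m - 1 := by
        rcases lt_or_eq_of_le (show A.gen x ≤ m by omega) with h | h
        · omega
        · exfalso; have := A.adj_gen u x hux (by omega); omega
      have hgy' : A.gen y ≤ m - 1 := by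
        rcases lt_or_eq_of_le (show A.gen y ≤ m by omega) with h | h
        · omega
        · exfalso; have := A.adj_gen u y huy (by omega); omega
      obtain ⟨r, hr, u', x', y', hgenu', hgenx', hgeny', hne', hadj1, hadj2, hadj3,
        hpsi1, hpsi2, hpsi3⟩ :=
        A.sur m (by omega) u x y hgu' hgx' hgy' (adj_ne A hxy) hux huy hxy
      obtain ⟨w, ⟨hw1, hw2⟩, -⟩ := A.attach (m-1) (by omega) u' x' y' hgenu'
        (by omega) (by omega) hne' hadj1 hadj2 hadj3
      have h2w : 2 ≤ A.gen w := by omega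
      have hpsiw : A.psi r w = z := by
        have H1 := A.psi_gen_ge2 r hr w h2w
        have H2 := A.psi_downset r hr w h2w
        have hconv : {t | A.adj w t ∧ A.gen t < A.gen w} = {t | A.adj w t ∧ A.gen t ≤ m - 1} := by
          ext t
          simp only [Set.mem_setOf_eq]
          exact and_congr_right fun _ => by omega
        rw [hconv, hw2, Set.image_insert_eq, Set.image_insert_eq, Set.image_singleton,
          hpsi1, hpsi2, hpsi3] at H2
        have exu := A.attach m (by omega) u x y hgu' (by omega) (by omega)
          (adj_ne A hxy) hux huy hxy
        refine exu.unique ⟨by omega, ?_⟩ ⟨by omega, ?_⟩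
        · rw [show A.gen w = m from by omega] at H2
          exact H2
        · have : {t | A.adj z t ∧ A.gen t < A.gen z} = {t | A.adj z t ∧ A.gen t ≤ m} := by
            ext t
            simp only [Set.mem_setOf_eq]
            exact and_congr_right fun _ => by omega
          rw [← this]; exact hds
      exact ⟨r, hr, w, by omega, hpsiw⟩

end ApollonianNetwork

theorem stmt15 (A : ApollonianNetwork) (k : ℕ) (hk : 1 ≤ k) :
    porousExpDomNum (A.G (k + 1)) ≤ 3 * porousExpDomNum (A.G k) := by
  classical
  set Sset := {n : ℕ∞ | ∃ S : Finset {v : A.Vert // A.gen v ≤ k},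
    IsPorousExpDomSet (A.G k) S ∧ (S.card : ℕ∞) = n} with hSset
  rcases Set.eq_empty_or_nonempty Sset with hemp | hne
  · unfold porousExpDomNum
    rw [← hSset, hemp, sInf_empty]
    rw [show (3 : ℕ∞) * ⊤ = ⊤ from by simp]
    exact le_top
  · have hmem := csInf_mem hne
    obtain ⟨S₀, hS₀, hcard⟩ := hmem
    -- the three copies
    have hgen1 : ∀ (r : A.Vert), A.gen r = 1 → ∀ v : {v : A.Vert // A.gen v ≤ k},
        A.gen (A.psi r v.1) ≤ k + 1 := by
      intro r hr v
      have := A.psi_gen_le r hr v.1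
      have := v.2
      omega
    let f : (r : A.Vert) → A.gen r = 1 →
        {v : A.Vert // A.gen v ≤ k} → {v : A.Vert // A.gen v ≤ k + 1} :=
      fun r hr v => ⟨A.psi r v.1, hgen1 r hr v⟩
    let T : Finset {v : A.Vert // A.gen v ≤ k + 1} :=
      (S₀.image (f A.cA A.gen_cA) ∪ S₀.image (f A.cB A.gen_cB)) ∪ S₀.image (f A.cC A.gen_cC)
    have hinj : ∀ (r : A.Vert) (hr : A.gen r = 1), Function.Injective (f r hr) := by
      intro r hr a b hab
      have : A.psi r a.1 = A.psi r b.1 := congrArg Subtype.val hab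
      exact Subtype.ext (A.psi_inj r hr k a.1 b.1 a.2 b.2 this)
    have hdom : IsPorousExpDomSet (A.G (k+1)) T := by
      intro z
      obtain ⟨r, hr, z', hz'le, hpsi⟩ := A.cover k hk z.1 z.2
      set z₀ : {v : A.Vert // A.gen v ≤ k} := ⟨z', hz'le⟩ with hz₀
      have hzeq : f r hr z₀ = z := Subtype.ext hpsi
      have hsub : S₀.image (f r hr) ⊆ T := by
        rcases (A.gen1_iff r).1 hr with rfl | rfl | rfl
        · intro t ht
          exact Finset.mem_union_left _ (Finset.mem_union_left _ ht)
        · intro t ht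
          exact Finset.mem_union_left _ (Finset.mem_union_right _ ht)
        · intro t ht
          exact Finset.mem_union_right _ ht
      let hom : A.G k →g A.G (k+1) :=
        ⟨f r hr, fun {a b} hab => A.psi_adj r hr hab⟩
      have hpointwise : ∀ s ∈ S₀,
          (if (A.G k).Reachable s z₀ then 2 * (2:ℝ)⁻¹ ^ (A.G k).dist s z₀ else 0) ≤
          (if (A.G (k+1)).Reachable (f r hr s) z
            then 2 * (2:ℝ)⁻¹ ^ (A.G (k+1)).dist (f r hr s) z else 0) := by
        intro s _
        rw [← hzeq]
        by_cases hreach : (A.G k).Reachable s z₀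
        · have hcoe : ∀ a, hom a = f r hr a := fun a => rfl
          have hreach' : (A.G (k+1)).Reachable (f r hr s) (f r hr z₀) := by
            have := SimpleGraph.Reachable.map hom hreach
            rwa [hcoe, hcoe] at this
          obtain ⟨p, hp⟩ := hreach.exists_walk_length_eq_dist
          have hd : (A.G (k+1)).dist (f r hr s) (f r hr z₀) ≤ (A.G k).dist s z₀ := by
            rw [← hp]
            have h9 := SimpleGraph.dist_le (p.map hom)
            rw [SimpleGraph.Walk.length_map, hcoe, hcoe] at h9
            exact h9
          rw [if_pos hreach, if_pos hreach']
          have hpow : ((2:ℝ)⁻¹) ^ (A.G k).dist s z₀ ≤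
              ((2:ℝ)⁻¹) ^ (A.G (k+1)).dist (f r hr s) (f r hr z₀) :=
            pow_le_pow_of_le_one (by norm_num) (by norm_num) hd
          linarith
        · rw [if_neg hreach]
          split
          · positivity
          · exact le_refl 0
      calc (1:ℝ) ≤ expWeight (A.G k) S₀ z₀ := hS₀ z₀
        _ ≤ ∑ s ∈ S₀, (if (A.G (k+1)).Reachable (f r hr s) z
              then 2 * (2:ℝ)⁻¹ ^ (A.G (k+1)).dist (f r hr s) z else 0) :=
            Finset.sum_le_sum hpointwise
        _ = ∑ t ∈ S₀.image (f r hr), (if (A.G (k+1)).Reachable t z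
              then 2 * (2:ℝ)⁻¹ ^ (A.G (k+1)).dist t z else 0) :=
            by rw [Finset.sum_image (fun a _ b _ hab => hinj r hr hab)]
        _ ≤ expWeight (A.G (k+1)) T z := by
            apply Finset.sum_le_sum_of_subset_of_nonneg hsub
            intro t _ _
            split
            · positivity
            · exact le_refl 0
    have hTcard : T.card ≤ 3 * S₀.card := by
      have h1 := Finset.card_union_le (S₀.image (f A.cA A.gen_cA) ∪ S₀.image (f A.cB A.gen_cB))
        (S₀.image (f A.cC A.gen_cC))
      have h2 := Finset.card_union_le (S₀.image (f A.cA A.gen_cA)) (S₀.image (f A.cB A.gen_cB))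
      have h3 := Finset.card_image_le (s := S₀) (f := f A.cA A.gen_cA)
      have h4 := Finset.card_image_le (s := S₀) (f := f A.cB A.gen_cB)
      have h5 := Finset.card_image_le (s := S₀) (f := f A.cC A.gen_cC)
      have hTeq : T = (S₀.image (f A.cA A.gen_cA) ∪ S₀.image (f A.cB A.gen_cB)) ∪
          S₀.image (f A.cC A.gen_cC) := rfl
      rw [hTeq]
      omega
    have hle : porousExpDomNum (A.G (k+1)) ≤ (T.card : ℕ∞) :=
      sInf_le ⟨T, hdom, rfl⟩
    refine hle.trans ?_
    have : (T.card : ℕ∞) ≤ ((3 * S₀.card : ℕ) : ℕ∞) := Nat.cast_le.mpr hTcard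
    refine this.trans ?_
    rw [Nat.cast_mul]
    unfold porousExpDomNum
    rw [← hSset, ← hcard]
    norm_num
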